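/- arXiv:2603.12687 — 2 statements merged into one kernel-verified Lean document; each statement's English description precedes it below -/
import Mathlib

section
/- Let n ≥ 1, let φ be a complex-valued Schwartz function on ℝⁿ whose Fourier transform 𝓕φ is supported in the closed ball {ξ ∈ ℝⁿ : |ξ| ≤ 1/4}, let N ≥ 1, and define f_N(x) = φ(x) · ∑_{k=1}^N k^{-3/2} e^{i k x₁}. Then ∫_{ℝⁿ} |ξ₁|² |𝓕f_N(ξ)|² dξ = (∑_{k=1}^N k^{-3}) ∫_{ℝⁿ} ξ₁² |𝓕φ(ξ)|² dξ + 2(∑_{k=1}^N k^{-2}) ∫_{ℝⁿ} ξ₁ |𝓕φ(ξ)|² dξ + (∑_{k=1}^N k^{-1}) ‖φ‖_{L²(ℝⁿ)}². -/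
open MeasureTheory Real
open scoped FourierTransform
open scoped RealInnerProductSpace

/-- The Fourier transform with normalization `𝓕g(ξ) = (2π)^{-n/2} ∫ g(x) e^{-ix·ξ} dx`. -/
noncomputable def fourierTr {n : ℕ} (g : EuclideanSpace ℝ (Fin n) → ℂ)
    (ξ : EuclideanSpace ℝ (Fin n)) : ℂ :=
  (((2 * π) ^ (-(n : ℝ) / 2) : ℝ) : ℂ) *
    ∫ x, g x * Complex.exp (-Complex.I * (⟪x, ξ⟫ : ℝ))

variable {n : ℕ}

lemma fourierTr_eq_fourierIntegral (g : EuclideanSpace ℝ (Fin n) → ℂ)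
    (ξ : EuclideanSpace ℝ (Fin n)) :
    fourierTr g ξ = (((2 * π) ^ (-(n : ℝ) / 2) : ℝ) : ℂ) * 𝓕 g ((2 * π)⁻¹ • ξ) := by
  rw [fourierTr, Real.fourier_eq']
  congr 1
  congr 1 with x
  rw [real_inner_smul_right, smul_eq_mul]
  have h1 : -2 * π * ((2 * π)⁻¹ * ⟪x, ξ⟫) = -⟪x, ξ⟫ := by
    have hπ : (2 : ℝ) * π ≠ 0 := by positivity
    field_simp
  rw [h1, mul_comm]
  push_cast
  ring_nf

lemma parseval_schwartz (f : SchwartzMap (EuclideanSpace ℝ (Fin n)) ℂ) :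
    ∫ ξ, ‖𝓕 (⇑f) ξ‖ ^ 2 = ∫ x, ‖f x‖ ^ 2 := by
  set F : SchwartzMap (EuclideanSpace ℝ (Fin n)) ℂ := SchwartzMap.fourierTransformCLM ℂ f with hF
  have hFc : ⇑F = 𝓕 ⇑f := rfl
  set g : EuclideanSpace ℝ (Fin n) → ℂ := fun ξ => (starRingEnd ℂ) (F ξ) with hg
  have hginteg : Integrable g := by
    refine ⟨Complex.continuous_conj.comp_aestronglyMeasurable F.integrable.1, ?_⟩
    simpa [HasFiniteIntegral, g] using F.integrable.2
  have h𝓕g : ∀ x, 𝓕 g x = (starRingEnd ℂ) (f x) := by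
    intro x
    have hinv : 𝓕⁻ (⇑F) x = f x := by
      rw [hFc, Continuous.fourierInv_fourier_eq f.continuous f.integrable F.integrable]
    rw [← hinv, Real.fourier_eq', Real.fourierInv_eq', ← integral_conj]
    congr 1 with ξ
    simp only [hg, smul_eq_mul, map_mul, Complex.conj_conj, ← Complex.exp_conj]
    congr 2
    simp [Complex.ext_iff]
  have hmul : ∫ ξ, (VectorFourier.fourierIntegral 𝐞 volume (innerₗ (EuclideanSpace ℝ (Fin n))) (⇑f) ξ) • g ξ
      = ∫ x, f x • (VectorFourier.fourierIntegral 𝐞 volume ((innerₗ (EuclideanSpace ℝ (Fin n))).flip) g x) :=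
    VectorFourier.integral_fourierIntegral_smul_eq_flip continuous_fourierChar
      (by exact continuous_inner) f.integrable hginteg
  have hflip : (innerₗ (EuclideanSpace ℝ (Fin n))).flip = innerₗ (EuclideanSpace ℝ (Fin n)) := by
    ext x y
    exact real_inner_comm x y
  rw [hflip] at hmul
  have hL : ∫ ξ, (𝓕 (⇑f) ξ) • g ξ = ((∫ ξ, ‖𝓕 (⇑f) ξ‖ ^ 2 : ℝ) : ℂ) := by
    have hpt : ∀ ξ, (𝓕 (⇑f) ξ) • g ξ = ((‖𝓕 (⇑f) ξ‖ ^ 2 : ℝ) : ℂ) := by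
      intro ξ
      rw [hg, smul_eq_mul, ← hFc, Complex.mul_conj, Complex.normSq_eq_norm_sq]
    simp_rw [hpt]
    exact integral_ofReal
  have hR : ∫ x, (f x) • (𝓕 g x) = ((∫ x, ‖f x‖ ^ 2 : ℝ) : ℂ) := by
    have hpt : ∀ x, (f x) • (𝓕 g x) = ((‖f x‖ ^ 2 : ℝ) : ℂ) := by
      intro x
      rw [h𝓕g x, smul_eq_mul, Complex.mul_conj, Complex.normSq_eq_norm_sq]
    simp_rw [hpt]
    exact integral_ofReal
  have : ((∫ ξ, ‖𝓕 (⇑f) ξ‖ ^ 2 : ℝ) : ℂ) = ((∫ x, ‖f x‖ ^ 2 : ℝ) : ℂ) := by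
    rw [← hL, ← hR]
    exact hmul
  exact_mod_cast this

lemma fourierTr_continuous (φ : SchwartzMap (EuclideanSpace ℝ (Fin n)) ℂ) :
    Continuous (fourierTr (⇑φ)) := by
  have : fourierTr (⇑φ) = fun ξ => (((2 * π) ^ (-(n : ℝ) / 2) : ℝ) : ℂ) *
      (SchwartzMap.fourierTransformCLM ℂ φ) ((2 * π)⁻¹ • ξ) := by
    ext ξ; rw [fourierTr_eq_fourierIntegral]; rfl
  rw [this]
  exact continuous_const.mul ((SchwartzMap.fourierTransformCLM ℂ φ).continuous.comp
    (continuous_const_smul _))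

lemma plancherel_fourierTr (φ : SchwartzMap (EuclideanSpace ℝ (Fin n)) ℂ) :
    ∫ ξ, ‖fourierTr (⇑φ) ξ‖ ^ 2 = ∫ x, ‖φ x‖ ^ 2 := by
  have h2π : (0:ℝ) < 2 * π := by positivity
  have hpt : ∀ ξ, ‖fourierTr (⇑φ) ξ‖ ^ 2
      = ((2 * π) ^ (-(n : ℝ) / 2)) ^ 2 * ‖𝓕 (⇑φ) ((2 * π)⁻¹ • ξ)‖ ^ 2 := by
    intro ξ
    rw [fourierTr_eq_fourierIntegral, norm_mul, mul_pow, Complex.norm_real,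
      Real.norm_eq_abs, abs_of_pos (rpow_pos_of_pos h2π _)]
  simp_rw [hpt]
  rw [integral_const_mul]
  rw [show (fun ξ : EuclideanSpace ℝ (Fin n) => ‖𝓕 (⇑φ) ((2 * π)⁻¹ • ξ)‖ ^ 2)
    = fun ξ => (fun η => ‖𝓕 (⇑φ) η‖ ^ 2) ((2 * π)⁻¹ • ξ) from rfl]
  rw [MeasureTheory.Measure.integral_comp_inv_smul volume (fun η : EuclideanSpace ℝ (Fin n) => ‖𝓕 (⇑φ) η‖ ^ 2) (2 * π)]
  rw [finrank_euclideanSpace_fin, smul_eq_mul, abs_of_pos (pow_pos h2π n), ← mul_assoc]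
  have hc : ((2 * π) ^ (-(n : ℝ) / 2)) ^ 2 * (2 * π) ^ n = 1 := by
    rw [← Real.rpow_natCast ((2 * π) ^ (-(n : ℝ) / 2)) 2, ← Real.rpow_mul h2π.le,
      ← Real.rpow_natCast (2 * π) n, ← Real.rpow_add h2π]
    norm_num
  rw [hc, one_mul, parseval_schwartz]

lemma integrable_mul_unit (φ : SchwartzMap (EuclideanSpace ℝ (Fin n)) ℂ)
    (g : EuclideanSpace ℝ (Fin n) → ℂ) (hg : Continuous g) (hgn : ∀ x, ‖g x‖ ≤ 1) :
    Integrable (fun x => φ x * g x) := by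
  have := Integrable.bdd_mul (φ.integrable (μ := volume)) hg.aestronglyMeasurable (c := 1) (Filter.Eventually.of_forall hgn)
  exact this.congr (Filter.Eventually.of_forall fun x => mul_comm _ _)

lemma fourierTr_modulation (φ : SchwartzMap (EuclideanSpace ℝ (Fin n)) ℂ)
    (i0 : Fin n) (k : ℝ) (ξ : EuclideanSpace ℝ (Fin n)) :
    fourierTr (fun x => φ x * Complex.exp (Complex.I * k * x i0)) ξ
      = fourierTr (⇑φ) (ξ - k • EuclideanSpace.single i0 (1:ℝ)) := by
  rw [fourierTr, fourierTr]
  congr 1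
  congr 1 with x
  have hin : ⟪x, ξ - k • EuclideanSpace.single i0 (1:ℝ)⟫ = ⟪x, ξ⟫ - k * x i0 := by
    rw [inner_sub_right, real_inner_smul_right, EuclideanSpace.inner_single_right]
    simp [mul_comm]
  rw [hin, mul_assoc, ← Complex.exp_add]
  congr 1
  push_cast
  ring

lemma continuous_coord (i0 : Fin n) :
    Continuous (fun x : EuclideanSpace ℝ (Fin n) => x i0) :=
  (EuclideanSpace.proj (𝕜 := ℝ) i0).continuous

lemma unit_exp_norm (i0 : Fin n) (k : ℝ) (ξ x : EuclideanSpace ℝ (Fin n)) :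
    ‖Complex.exp (Complex.I * k * (x i0 : ℝ)) * Complex.exp (-Complex.I * (⟪x, ξ⟫ : ℝ))‖ = 1 := by
  rw [norm_mul, Complex.norm_exp, Complex.norm_exp]
  simp [Complex.mul_re, Complex.mul_im]

lemma unit_exp_continuous (i0 : Fin n) (k : ℝ) (ξ : EuclideanSpace ℝ (Fin n)) :
    Continuous (fun x : EuclideanSpace ℝ (Fin n) =>
      Complex.exp (Complex.I * k * (x i0 : ℝ)) * Complex.exp (-Complex.I * (⟪x, ξ⟫ : ℝ))) := by
  apply Continuous.mul
  · exact Complex.continuous_exp.comp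
      (continuous_const.mul ((Complex.continuous_ofReal.comp (continuous_coord i0))))
  · exact Complex.continuous_exp.comp
      (continuous_const.mul (Complex.continuous_ofReal.comp
        (Continuous.inner continuous_id continuous_const)))

lemma integrand_integrable (φ : SchwartzMap (EuclideanSpace ℝ (Fin n)) ℂ)
    (i0 : Fin n) (k : ℝ) (ξ : EuclideanSpace ℝ (Fin n)) :
    Integrable (fun x : EuclideanSpace ℝ (Fin n) =>
      (φ x * Complex.exp (Complex.I * k * (x i0 : ℝ))) *
        Complex.exp (-Complex.I * (⟪x, ξ⟫ : ℝ))) := by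
  have := integrable_mul_unit φ _ (unit_exp_continuous i0 k ξ)
    (fun x => le_of_eq (unit_exp_norm i0 k ξ x))
  exact this.congr (Filter.Eventually.of_forall fun x => by ring)

lemma fourierTr_sum (φ : SchwartzMap (EuclideanSpace ℝ (Fin n)) ℂ) (i0 : Fin n) (N : ℕ)
    (c : ℕ → ℝ) (ξ : EuclideanSpace ℝ (Fin n)) :
    fourierTr (fun x => φ x * ∑ k ∈ Finset.Icc 1 N,
        ((c k : ℝ) : ℂ) * Complex.exp (Complex.I * (k : ℝ) * x i0)) ξ
      = ∑ k ∈ Finset.Icc 1 N, ((c k : ℝ) : ℂ) *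
          fourierTr (⇑φ) (ξ - (k : ℝ) • EuclideanSpace.single i0 (1:ℝ)) := by
  simp_rw [← fourierTr_modulation φ i0]
  rw [fourierTr]
  have h1 : ∀ x : EuclideanSpace ℝ (Fin n),
      (φ x * ∑ k ∈ Finset.Icc 1 N, ((c k : ℝ) : ℂ) * Complex.exp (Complex.I * (k : ℝ) * x i0))
        * Complex.exp (-Complex.I * (⟪x, ξ⟫ : ℝ))
      = ∑ k ∈ Finset.Icc 1 N, ((c k : ℝ) : ℂ) *
          ((φ x * Complex.exp (Complex.I * (k : ℝ) * (x i0 : ℝ)))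
            * Complex.exp (-Complex.I * (⟪x, ξ⟫ : ℝ))) := by
    intro x
    rw [Finset.mul_sum, Finset.sum_mul]
    exact Finset.sum_congr rfl fun k _ => by ring
  simp_rw [h1]
  rw [integral_finset_sum (f := fun (k : ℕ) (x : EuclideanSpace ℝ (Fin n)) =>
        ((c k : ℝ) : ℂ) * ((φ x * Complex.exp (Complex.I * (k : ℝ) * (x i0 : ℝ)))
          * Complex.exp (-Complex.I * (⟪x, ξ⟫ : ℝ))))
      (Finset.Icc 1 N) (fun k _ => (integrand_integrable φ i0 k ξ).const_mul _)]
  rw [Finset.mul_sum]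
  refine Finset.sum_congr rfl fun k _ => ?_
  rw [integral_const_mul, fourierTr]
  ring

lemma norm_sq_sum_of_disjoint {ι : Type*} (s : Finset ι) (f : ι → ℂ)
    (h : ∀ i ∈ s, ∀ j ∈ s, i ≠ j → f i = 0 ∨ f j = 0) :
    ‖∑ i ∈ s, f i‖ ^ 2 = ∑ i ∈ s, ‖f i‖ ^ 2 := by
  by_cases hex : ∃ i ∈ s, f i ≠ 0
  · obtain ⟨i, hi, hfi⟩ := hex
    have h1 : ∑ j ∈ s, f j = f i :=
      Finset.sum_eq_single_of_mem i hi fun j hj hne => (h j hj i hi hne).resolve_right hfi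
    have h2 : ∑ j ∈ s, ‖f j‖ ^ 2 = ‖f i‖ ^ 2 :=
      Finset.sum_eq_single_of_mem i hi fun j hj hne => by
        rw [(h j hj i hi hne).resolve_right hfi]; simp
    rw [h1, h2]
  · push_neg at hex
    rw [Finset.sum_eq_zero hex, Finset.sum_eq_zero fun i hi => by rw [hex i hi]; simp]
    simp

lemma integrable_weight (φ : SchwartzMap (EuclideanSpace ℝ (Fin n)) ℂ)
    (hsupp : Function.support (fourierTr (⇑φ)) ⊆ Metric.closedBall 0 (1 / 4))
    (w : EuclideanSpace ℝ (Fin n) → ℝ) (hw : Continuous w) (v : EuclideanSpace ℝ (Fin n)) :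
    Integrable (fun ξ => w ξ * ‖fourierTr (⇑φ) (ξ - v)‖ ^ 2) := by
  have hc : Continuous fun ξ : EuclideanSpace ℝ (Fin n) => w ξ * ‖fourierTr (⇑φ) (ξ - v)‖ ^ 2 :=
    hw.mul ((((fourierTr_continuous φ).comp (continuous_id.sub continuous_const)).norm).pow 2)
  apply hc.integrable_of_hasCompactSupport
  apply HasCompactSupport.intro (isCompact_closedBall v (1/4))
  intro x hx
  have hz : fourierTr (⇑φ) (x - v) = 0 := by
    by_contra h
    apply hx
    have hmem := hsupp (Function.mem_support.mpr h)
    rw [mem_closedBall_zero_iff] at hmem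
    rw [Metric.mem_closedBall, dist_eq_norm]
    exact hmem
  simp [hz]

/-- For Schwartz `φ` with `𝓕φ` supported in `{|ξ| ≤ 1/4}` and
`f_N(x) = φ(x) ∑_{k=1}^N k^{-3/2} e^{ikx₁}`:
`∫ |ξ₁|² |𝓕f_N(ξ)|² dξ = (∑ k^{-3}) ∫ ξ₁²|𝓕φ|² + 2(∑ k^{-2}) ∫ ξ₁|𝓕φ|² + (∑ k^{-1}) ‖φ‖_{L²}²`. -/
theorem partial_sum_weighted_identity (n : ℕ) (hn : 1 ≤ n)
    (φ : SchwartzMap (EuclideanSpace ℝ (Fin n)) ℂ)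
    (hsupp : Function.support (fourierTr (⇑φ)) ⊆ Metric.closedBall 0 (1 / 4))
    (N : ℕ) (hN : 1 ≤ N) :
    (∫ ξ : EuclideanSpace ℝ (Fin n),
        (ξ ⟨0, hn⟩) ^ 2 *
          ‖fourierTr
            (fun x => φ x * ∑ k ∈ Finset.Icc 1 N,
              (((k : ℝ) ^ (-(3 : ℝ) / 2) : ℝ) : ℂ) *
                Complex.exp (Complex.I * (k : ℝ) * x ⟨0, hn⟩)) ξ‖ ^ 2) =
      (∑ k ∈ Finset.Icc 1 N, (k : ℝ) ^ (-(3 : ℝ))) *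
          (∫ ξ : EuclideanSpace ℝ (Fin n), (ξ ⟨0, hn⟩) ^ 2 * ‖fourierTr (⇑φ) ξ‖ ^ 2) +
        2 * (∑ k ∈ Finset.Icc 1 N, (k : ℝ) ^ (-(2 : ℝ))) *
          (∫ ξ : EuclideanSpace ℝ (Fin n), (ξ ⟨0, hn⟩) * ‖fourierTr (⇑φ) ξ‖ ^ 2) +
        (∑ k ∈ Finset.Icc 1 N, (k : ℝ) ^ (-(1 : ℝ))) *
          (∫ x : EuclideanSpace ℝ (Fin n), ‖φ x‖ ^ 2) := by
  set i0 : Fin n := ⟨0, hn⟩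
  set e1 : EuclideanSpace ℝ (Fin n) := EuclideanSpace.single i0 (1:ℝ) with he1
  set F : EuclideanSpace ℝ (Fin n) → ℂ := fourierTr (⇑φ) with hFdef
  set A : ℝ := ∫ ξ : EuclideanSpace ℝ (Fin n), (ξ i0) ^ 2 * ‖F ξ‖ ^ 2 with hA
  set B : ℝ := ∫ ξ : EuclideanSpace ℝ (Fin n), (ξ i0) * ‖F ξ‖ ^ 2 with hB
  set C : ℝ := ∫ x : EuclideanSpace ℝ (Fin n), ‖φ x‖ ^ 2 with hC
  -- basic integrabilities
  have hAint : Integrable (fun ξ : EuclideanSpace ℝ (Fin n) => (ξ i0) ^ 2 * ‖F ξ‖ ^ 2) := by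
    simpa using integrable_weight φ hsupp (fun ξ => (ξ i0) ^ 2) ((continuous_coord i0).pow 2) 0
  have hBint : Integrable (fun ξ : EuclideanSpace ℝ (Fin n) => (ξ i0) * ‖F ξ‖ ^ 2) := by
    simpa using integrable_weight φ hsupp (fun ξ => (ξ i0)) (continuous_coord i0) 0
  have hCint : Integrable (fun ξ : EuclideanSpace ℝ (Fin n) => ‖F ξ‖ ^ 2) := by
    simpa using integrable_weight φ hsupp (fun _ => (1:ℝ)) continuous_const 0
  -- Step 1: rewrite the Fourier transform of the modulated sum
  have hFsum : ∀ ξ, fourierTr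
      (fun x => φ x * ∑ k ∈ Finset.Icc 1 N,
        (((k : ℝ) ^ (-(3 : ℝ) / 2) : ℝ) : ℂ) *
          Complex.exp (Complex.I * (k : ℝ) * x i0)) ξ
      = ∑ k ∈ Finset.Icc 1 N, (((k : ℝ) ^ (-(3 : ℝ) / 2) : ℝ) : ℂ) *
          F (ξ - (k : ℝ) • e1) :=
    fun ξ => fourierTr_sum φ i0 N (fun k => (k : ℝ) ^ (-(3 : ℝ) / 2)) ξ
  -- disjointness of supports
  have hdisj : ∀ ξ : EuclideanSpace ℝ (Fin n), ∀ k ∈ Finset.Icc 1 N, ∀ j ∈ Finset.Icc 1 N,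
      k ≠ j → (((k : ℝ) ^ (-(3 : ℝ) / 2) : ℝ) : ℂ) * F (ξ - (k : ℝ) • e1) = 0 ∨
        (((j : ℝ) ^ (-(3 : ℝ) / 2) : ℝ) : ℂ) * F (ξ - (j : ℝ) • e1) = 0 := by
    intro ξ k _ j _ hne
    by_contra hcon
    push_neg at hcon
    obtain ⟨h1, h2⟩ := hcon
    have hk0 : F (ξ - (k : ℝ) • e1) ≠ 0 := fun h => h1 (by rw [h, mul_zero])
    have hj0 : F (ξ - (j : ℝ) • e1) ≠ 0 := fun h => h2 (by rw [h, mul_zero])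
    have hkm := hsupp (Function.mem_support.mpr hk0)
    have hjm := hsupp (Function.mem_support.mpr hj0)
    rw [mem_closedBall_zero_iff] at hkm hjm
    have hdiff : ξ - (j : ℝ) • e1 - (ξ - (k : ℝ) • e1) = ((k : ℝ) - (j : ℝ)) • e1 := by
      rw [sub_smul]; abel
    have hnorm : ‖ξ - (j : ℝ) • e1 - (ξ - (k : ℝ) • e1)‖ = |(k : ℝ) - (j : ℝ)| := by
      rw [hdiff, norm_smul, he1, EuclideanSpace.norm_single]
      simp [Real.norm_eq_abs]
    have hub : ‖ξ - (j : ℝ) • e1 - (ξ - (k : ℝ) • e1)‖ ≤ 1/2 := by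
      calc ‖ξ - (j : ℝ) • e1 - (ξ - (k : ℝ) • e1)‖
          ≤ ‖ξ - (j : ℝ) • e1‖ + ‖ξ - (k : ℝ) • e1‖ := norm_sub_le _ _
        _ ≤ 1/4 + 1/4 := add_le_add hjm hkm
        _ = 1/2 := by norm_num
    have hlb : (1:ℝ) ≤ |(k : ℝ) - (j : ℝ)| := by
      have : ((k : ℤ) - (j : ℤ)) ≠ 0 := sub_ne_zero.mpr (by exact_mod_cast hne)
      have h1le : (1 : ℤ) ≤ |(k : ℤ) - (j : ℤ)| := Int.one_le_abs this
      exact_mod_cast h1le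
    rw [hnorm] at hub
    linarith
  -- pointwise expansion of the squared norm
  have hc2 : ∀ k ∈ Finset.Icc 1 N, (((k:ℝ) ^ (-(3:ℝ)/2)) : ℝ) ^ 2 = (k:ℝ) ^ (-(3:ℝ)) := by
    intro k hk
    have hk1 : 1 ≤ k := (Finset.mem_Icc.mp hk).1
    have hpos : (0:ℝ) < k := by exact_mod_cast hk1
    rw [← Real.rpow_natCast ((k:ℝ) ^ (-(3:ℝ)/2)) 2, ← Real.rpow_mul hpos.le]
    norm_num
  have hpt : ∀ ξ : EuclideanSpace ℝ (Fin n),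
      (ξ i0) ^ 2 * ‖∑ k ∈ Finset.Icc 1 N, (((k : ℝ) ^ (-(3 : ℝ) / 2) : ℝ) : ℂ) *
          F (ξ - (k : ℝ) • e1)‖ ^ 2
      = ∑ k ∈ Finset.Icc 1 N, (k:ℝ) ^ (-(3:ℝ)) *
          ((ξ i0) ^ 2 * ‖F (ξ - (k : ℝ) • e1)‖ ^ 2) := by
    intro ξ
    rw [norm_sq_sum_of_disjoint _ _ (hdisj ξ), Finset.mul_sum]
    refine Finset.sum_congr rfl fun k hk => ?_
    rw [norm_mul, mul_pow, Complex.norm_real, Real.norm_eq_abs, sq_abs, hc2 k hk]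
    ring
  -- translation identity
  have htrans : ∀ k : ℕ,
      (∫ ξ : EuclideanSpace ℝ (Fin n), (ξ i0) ^ 2 * ‖F (ξ - (k : ℝ) • e1)‖ ^ 2)
        = A + 2 * (k:ℝ) * B + (k:ℝ) ^ 2 * (∫ ξ, ‖F ξ‖ ^ 2) := by
    intro k
    have hshift := MeasureTheory.integral_add_right_eq_self (μ := volume)
      (fun ξ : EuclideanSpace ℝ (Fin n) => (ξ i0) ^ 2 * ‖F (ξ - (k : ℝ) • e1)‖ ^ 2)
      ((k : ℝ) • e1)
    have hcoord : ∀ ξ : EuclideanSpace ℝ (Fin n), (ξ + (k : ℝ) • e1) i0 = ξ i0 + k := by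
      intro ξ
      rw [he1]
      simp [EuclideanSpace.single_apply]
    have hpt2 : ∀ ξ : EuclideanSpace ℝ (Fin n),
        ((ξ + (k : ℝ) • e1) i0) ^ 2 * ‖F (ξ + (k : ℝ) • e1 - (k : ℝ) • e1)‖ ^ 2
        = (ξ i0) ^ 2 * ‖F ξ‖ ^ 2 + 2 * (k:ℝ) * ((ξ i0) * ‖F ξ‖ ^ 2)
          + (k:ℝ) ^ 2 * ‖F ξ‖ ^ 2 := by
      intro ξ
      rw [add_sub_cancel_right, hcoord ξ]
      ring
    rw [← hshift]
    simp_rw [hpt2]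
    have hI1 : Integrable (fun ξ : EuclideanSpace ℝ (Fin n) =>
        (ξ i0) ^ 2 * ‖F ξ‖ ^ 2 + 2 * (k:ℝ) * ((ξ i0) * ‖F ξ‖ ^ 2)) :=
      hAint.add (hBint.const_mul _)
    rw [integral_add hI1 (hCint.const_mul _), integral_add hAint (hBint.const_mul _),
      integral_const_mul, integral_const_mul]
  -- Plancherel
  have hplan : (∫ ξ : EuclideanSpace ℝ (Fin n), ‖F ξ‖ ^ 2) = C := plancherel_fourierTr φ
  -- main computation
  calc (∫ ξ : EuclideanSpace ℝ (Fin n), (ξ i0) ^ 2 *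
          ‖fourierTr (fun x => φ x * ∑ k ∈ Finset.Icc 1 N,
            (((k : ℝ) ^ (-(3 : ℝ) / 2) : ℝ) : ℂ) *
              Complex.exp (Complex.I * (k : ℝ) * x i0)) ξ‖ ^ 2)
      = ∫ ξ : EuclideanSpace ℝ (Fin n), ∑ k ∈ Finset.Icc 1 N, (k:ℝ) ^ (-(3:ℝ)) *
          ((ξ i0) ^ 2 * ‖F (ξ - (k : ℝ) • e1)‖ ^ 2) := by
        refine integral_congr_ae (Filter.Eventually.of_forall fun ξ => ?_)
        dsimp only
        rw [hFsum ξ, hpt ξ]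
    _ = ∑ k ∈ Finset.Icc 1 N, (k:ℝ) ^ (-(3:ℝ)) *
          (∫ ξ : EuclideanSpace ℝ (Fin n), (ξ i0) ^ 2 * ‖F (ξ - (k : ℝ) • e1)‖ ^ 2) := by
        rw [integral_finset_sum _ (fun k _ =>
          (integrable_weight φ hsupp (fun ξ => (ξ i0) ^ 2)
            ((continuous_coord i0).pow 2) _).const_mul _)]
        exact Finset.sum_congr rfl fun k _ => integral_const_mul _ _
    _ = ∑ k ∈ Finset.Icc 1 N, ((k:ℝ) ^ (-(3:ℝ)) * A + (k:ℝ) ^ (-(2:ℝ)) * (2 * B)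
          + (k:ℝ) ^ (-(1:ℝ)) * C) := by
        refine Finset.sum_congr rfl fun k hk => ?_
        have hk1 : 1 ≤ k := (Finset.mem_Icc.mp hk).1
        have hpos : (0:ℝ) < k := by exact_mod_cast hk1
        rw [htrans k, hplan]
        have e2 : (k:ℝ) ^ (-(3:ℝ)) * (k:ℝ) = (k:ℝ) ^ (-(2:ℝ)) := by
          nth_rewrite 2 [show ((k:ℝ)) = (k:ℝ) ^ (1:ℝ) from (Real.rpow_one _).symm]
          rw [← Real.rpow_add hpos]; norm_num
        have e1' : (k:ℝ) ^ (-(3:ℝ)) * (k:ℝ) ^ 2 = (k:ℝ) ^ (-(1:ℝ)) := by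
          rw [← Real.rpow_natCast (k:ℝ) 2, ← Real.rpow_add hpos]; norm_num
        calc (k:ℝ) ^ (-(3:ℝ)) * (A + 2 * (k:ℝ) * B + (k:ℝ) ^ 2 * C)
            = (k:ℝ) ^ (-(3:ℝ)) * A + ((k:ℝ) ^ (-(3:ℝ)) * (k:ℝ)) * (2 * B)
              + ((k:ℝ) ^ (-(3:ℝ)) * (k:ℝ) ^ 2) * C := by ring
          _ = (k:ℝ) ^ (-(3:ℝ)) * A + (k:ℝ) ^ (-(2:ℝ)) * (2 * B)
              + (k:ℝ) ^ (-(1:ℝ)) * C := by rw [e2, e1']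
    _ = (∑ k ∈ Finset.Icc 1 N, (k : ℝ) ^ (-(3 : ℝ))) * A +
        2 * (∑ k ∈ Finset.Icc 1 N, (k : ℝ) ^ (-(2 : ℝ))) * B +
        (∑ k ∈ Finset.Icc 1 N, (k : ℝ) ^ (-(1 : ℝ))) * C := by
        rw [Finset.sum_add_distrib, Finset.sum_add_distrib, ← Finset.sum_mul,
          ← Finset.sum_mul, ← Finset.sum_mul]
        ring
end

section
/- Let n ≥ 1. There exists a function f ∈ L¹(ℝⁿ) ∩ L²(ℝⁿ) such that, with the Gaussian window g(y) = e^{-|y|²}, the short-time Fourier transform V_g f(x, ξ) = ∫_{ℝⁿ} f(y) \overline{g(y − x)} e^{-i y·ξ} dy satisfies ∬_{ℝ^{2n}} |V_g f(x, ξ)| dx dξ < ∞, while ∫_{ℝⁿ} |ξ|² |𝓕f(ξ)|² dξ = ∞. In particular, the modulation space M^{1,1}(ℝⁿ) is not contained in the Sobolev space H¹(ℝⁿ). -/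
open MeasureTheory Real
open scoped RealInnerProductSpace ENNReal

/-- The short-time Fourier transform `V_g h(x, ξ) = ∫ h(y) conj(g(y − x)) e^{-iy·ξ} dy`. -/
noncomputable def stft {n : ℕ} (g h : EuclideanSpace ℝ (Fin n) → ℂ)
    (x ξ : EuclideanSpace ℝ (Fin n)) : ℂ :=
  ∫ y, h y * (starRingEnd ℂ) (g (y - x)) * Complex.exp (-Complex.I * (⟪y, ξ⟫ : ℝ))

namespace NotSubH1

noncomputable section

variable {n : ℕ}

abbrev V (n : ℕ) := EuclideanSpace ℝ (Fin n)

/-- coefficients `(k+1)^{-3/2}` -/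
def aa (k : ℕ) : ℝ := (((k : ℝ) + 1) ^ ((3:ℝ)/2))⁻¹

lemma aa_pos (k : ℕ) : 0 < aa k := by
  have h : (0:ℝ) < ((k:ℝ) + 1) ^ ((3:ℝ)/2) := Real.rpow_pos_of_pos (by positivity) _
  rw [aa]
  exact inv_pos.mpr h

lemma summable_aa : Summable aa := by
  have h : Summable (fun k : ℕ => 1 / (k : ℝ) ^ ((3:ℝ)/2)) :=
    Real.summable_one_div_nat_rpow.mpr (by norm_num)
  have h2 := (summable_nat_add_iff 1).mpr h
  refine h2.congr fun k => ?_
  simp only [aa, one_div]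
  push_cast
  ring_nf

lemma aa_sq (k : ℕ) : ((k:ℝ) + 1) ^ 2 * aa k ^ 2 = (((k:ℝ) + 1))⁻¹ := by
  have hx : (0:ℝ) < (k:ℝ) + 1 := by positivity
  have h3 : (((k:ℝ) + 1) ^ ((3:ℝ)/2)) ^ 2 = ((k:ℝ) + 1) ^ (3:ℕ) := by
    rw [← Real.rpow_natCast (((k:ℝ) + 1) ^ ((3:ℝ)/2)) 2, ← Real.rpow_mul hx.le]
    norm_num
  rw [aa, inv_pow, h3]
  field_simp

def ee (n : ℕ) (i : Fin n) : V n := EuclideanSpace.single i (1:ℝ)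

lemma norm_ee (i : Fin n) : ‖ee n i‖ = 1 := by
  simp [ee, EuclideanSpace.norm_single]

def vv (i : Fin n) (k : ℕ) : V n := ((k:ℝ) + 1) • ee n i

lemma norm_vv (i : Fin n) (k : ℕ) : ‖vv i k‖ = (k:ℝ) + 1 := by
  rw [vv, norm_smul, norm_ee]
  simp [abs_of_pos]
  positivity

lemma norm_vv_sub (i : Fin n) {k j : ℕ} (hkj : k ≠ j) : 1 ≤ ‖vv i k - vv i j‖ := by
  have : vv i k - vv i j = ((k:ℝ) - (j:ℝ)) • ee n i := by
    rw [vv, vv, ← sub_smul]; ring_nf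
  rw [this, norm_smul, norm_ee, mul_one]
  have h2 : (1:ℝ) ≤ |(k:ℝ) - (j:ℝ)| := by
    have hne : (k:ℤ) - (j:ℤ) ≠ 0 := by omega
    have h3 := Int.one_le_abs hne
    exact_mod_cast h3
  simpa using h2

/-- The modulated Gaussian terms. -/
def term (i : Fin n) (k : ℕ) (y : V n) : ℂ :=
  (aa k : ℂ) * Complex.exp (Complex.I * ((⟪vv i k, y⟫ : ℝ) : ℂ)) *
    Complex.exp (((-‖y‖ ^ 2 : ℝ) : ℂ))

/-- The counterexample function. -/
def ff (i : Fin n) (y : V n) : ℂ := ∑' k, term i k y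

lemma norm_term (i : Fin n) (k : ℕ) (y : V n) :
    ‖term i k y‖ = aa k * Real.exp (-‖y‖ ^ 2) := by
  rw [term, norm_mul, norm_mul, Complex.norm_real, Real.norm_eq_abs,
    Complex.norm_exp, Complex.norm_exp]
  simp only [Complex.ofReal_re, Complex.mul_re, Complex.I_re, Complex.ofReal_im, Complex.I_im,
    Complex.neg_re]
  rw [_root_.abs_of_nonneg (aa_pos k).le]
  norm_num

/-- Key Gaussian integral. -/
lemma key_integral (n : ℕ) (b : ℝ) (hb : 0 < b) (w : V n) :
    (∫ y : V n, Complex.exp (((-(b * ‖y‖ ^ 2) : ℝ) : ℂ) + Complex.I * ((⟪w, y⟫ : ℝ) : ℂ))) =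
      (((π / b) ^ ((n:ℝ)/2) : ℝ) : ℂ) * Complex.exp (((-(‖w‖ ^ 2 / (4 * b)) : ℝ) : ℂ)) := by
  have hb' : 0 < ((b:ℂ)).re := by simpa using hb
  have h := GaussianFourier.integral_cexp_neg_mul_sq_norm_add (V := V n) hb' Complex.I w
  have heq : (fun y : V n => Complex.exp (((-(b * ‖y‖ ^ 2) : ℝ) : ℂ) + Complex.I * ((⟪w, y⟫ : ℝ) : ℂ)))
      = fun y : V n => Complex.exp (-(b:ℂ) * (‖y‖:ℂ) ^ 2 + Complex.I * ((⟪w, y⟫ : ℝ) : ℂ)) := by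
    funext y; congr 1; push_cast; ring
  rw [heq, h, Complex.I_sq, finrank_euclideanSpace_fin]
  congr 1
  · rw [← Complex.ofReal_div, Complex.ofReal_cpow (div_nonneg pi_pos.le hb.le)]
    norm_num
  · congr 1
    push_cast
    ring

lemma key_integrable (n : ℕ) (b : ℝ) (hb : 0 < b) (w : V n) :
    Integrable (fun y : V n =>
      Complex.exp (((-(b * ‖y‖ ^ 2) : ℝ) : ℂ) + Complex.I * ((⟪w, y⟫ : ℝ) : ℂ))) := by
  have hb' : 0 < ((b:ℂ)).re := by simpa using hb
  have h := GaussianFourier.integrable_cexp_neg_mul_sq_norm_add (V := V n) hb' Complex.I w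
  refine h.congr ?_
  filter_upwards with y
  congr 1; push_cast; ring

lemma integrable_gauss (n : ℕ) (b : ℝ) (hb : 0 < b) :
    Integrable (fun y : V n => Real.exp (-(b * ‖y‖ ^ 2))) := by
  have h := (key_integrable n b hb 0).norm
  refine h.congr ?_
  filter_upwards with y
  simp only [Complex.norm_exp]
  congr 1
  simp only [Complex.add_re, Complex.mul_re, Complex.I_re, Complex.I_im, Complex.ofReal_re,
    Complex.ofReal_im]
  norm_num

lemma term_mul_kernel (i : Fin n) (k : ℕ) (ξ : V n) (y : V n) :
    term i k y * Complex.exp (-Complex.I * ((⟪y, ξ⟫ : ℝ) : ℂ)) =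
      (aa k : ℂ) * Complex.exp (((-(1 * ‖y‖ ^ 2) : ℝ) : ℂ) +
        Complex.I * ((⟪vv i k - ξ, y⟫ : ℝ) : ℂ)) := by
  have hi : (⟪vv i k - ξ, y⟫ : ℝ) = ⟪vv i k, y⟫ - ⟪y, ξ⟫ := by
    rw [inner_sub_left, real_inner_comm y ξ]
  rw [term, mul_assoc, mul_assoc, ← Complex.exp_add, ← Complex.exp_add, hi]
  congr 2
  push_cast
  ring

lemma fourier_term (i : Fin n) (k : ℕ) (ξ : V n) :
    (∫ y : V n, term i k y * Complex.exp (-Complex.I * ((⟪y, ξ⟫ : ℝ) : ℂ))) =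
      ((aa k * π ^ ((n:ℝ)/2) * Real.exp (-(‖vv i k - ξ‖ ^ 2 / 4)) : ℝ) : ℂ) := by
  simp only [term_mul_kernel i k ξ]
  rw [MeasureTheory.integral_const_mul, key_integral n 1 one_pos (vv i k - ξ)]
  rw [← Complex.ofReal_exp]
  push_cast
  norm_num
  ring

lemma stft_integrand (i : Fin n) (k : ℕ) (x ξ y : V n) :
    term i k y * (starRingEnd ℂ) ((Real.exp (-‖y - x‖ ^ 2) : ℝ) : ℂ) *
        Complex.exp (-Complex.I * ((⟪y, ξ⟫ : ℝ) : ℂ)) =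
      (aa k : ℂ) * Complex.exp (((-(‖y‖ ^ 2 + ‖y - x‖ ^ 2) : ℝ) : ℂ) +
        Complex.I * ((⟪vv i k - ξ, y⟫ : ℝ) : ℂ)) := by
  have hi : (⟪vv i k - ξ, y⟫ : ℝ) = ⟪vv i k, y⟫ - ⟪y, ξ⟫ := by
    rw [inner_sub_left, real_inner_comm y ξ]
  rw [Complex.conj_ofReal, term, Complex.ofReal_exp, mul_assoc, mul_assoc, mul_assoc,
    ← Complex.exp_add, ← Complex.exp_add, ← Complex.exp_add, hi]
  congr 2
  push_cast
  ring

lemma shifted_integrand (i : Fin n) (k : ℕ) (x ξ z : V n) :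
    (aa k : ℂ) * Complex.exp (((-(‖z + (2:ℝ)⁻¹ • x‖ ^ 2 + ‖z + (2:ℝ)⁻¹ • x - x‖ ^ 2) : ℝ) : ℂ) +
        Complex.I * ((⟪vv i k - ξ, z + (2:ℝ)⁻¹ • x⟫ : ℝ) : ℂ)) =
      ((aa k : ℂ) * Complex.exp (((-(‖x‖ ^ 2 / 2) : ℝ) : ℂ) +
          Complex.I * ((⟪vv i k - ξ, (2:ℝ)⁻¹ • x⟫ : ℝ) : ℂ))) *
        Complex.exp (((-(2 * ‖z‖ ^ 2) : ℝ) : ℂ) +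
          Complex.I * ((⟪vv i k - ξ, z⟫ : ℝ) : ℂ)) := by
  set c : V n := (2:ℝ)⁻¹ • x with hc
  set w : V n := vv i k - ξ with hw
  have h2 : c + c = x := by rw [hc, ← add_smul]; norm_num
  have hzc : z + c - x = z - c := by rw [← h2]; abel
  have hcn : ‖c‖ ^ 2 = ‖x‖ ^ 2 / 4 := by
    rw [hc, norm_smul, mul_pow]
    simp [Real.norm_eq_abs]
    ring
  have hre : ‖z + c‖ ^ 2 + ‖z + c - x‖ ^ 2 = 2 * ‖z‖ ^ 2 + ‖x‖ ^ 2 / 2 := by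
    rw [hzc, norm_add_sq_real, norm_sub_sq_real]
    linarith [hcn]
  have him : (⟪w, z + c⟫ : ℝ) = ⟪w, z⟫ + ⟪w, c⟫ := inner_add_right w z c
  rw [mul_assoc, ← Complex.exp_add, hre, him]
  congr 2
  push_cast
  ring

lemma stft_term_eval (i : Fin n) (k : ℕ) (x ξ : V n) :
    (∫ y : V n, term i k y * (starRingEnd ℂ) ((Real.exp (-‖y - x‖ ^ 2) : ℝ) : ℂ) *
        Complex.exp (-Complex.I * ((⟪y, ξ⟫ : ℝ) : ℂ))) =
      ((aa k * Real.exp (-(‖x‖ ^ 2 / 2)) * (π / 2) ^ ((n:ℝ)/2) *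
          Real.exp (-(‖vv i k - ξ‖ ^ 2 / 8)) : ℝ) : ℂ) *
        Complex.exp (Complex.I * ((⟪vv i k - ξ, (2:ℝ)⁻¹ • x⟫ : ℝ) : ℂ)) := by
  simp only [stft_integrand i k x ξ]
  rw [← MeasureTheory.integral_add_right_eq_self (μ := volume)
    (fun y : V n => (aa k : ℂ) * Complex.exp (((-(‖y‖ ^ 2 + ‖y - x‖ ^ 2) : ℝ) : ℂ) +
      Complex.I * ((⟪vv i k - ξ, y⟫ : ℝ) : ℂ))) ((2:ℝ)⁻¹ • x)]
  simp only [shifted_integrand i k x ξ]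
  rw [MeasureTheory.integral_const_mul, key_integral n 2 two_pos (vv i k - ξ)]
  rw [Complex.exp_add, ← Complex.ofReal_exp, ← Complex.ofReal_exp]
  push_cast
  norm_num
  ring

lemma norm_stft_term (i : Fin n) (k : ℕ) (x ξ : V n) :
    ‖∫ y : V n, term i k y * (starRingEnd ℂ) ((Real.exp (-‖y - x‖ ^ 2) : ℝ) : ℂ) *
        Complex.exp (-Complex.I * ((⟪y, ξ⟫ : ℝ) : ℂ))‖ =
      aa k * Real.exp (-(‖x‖ ^ 2 / 2)) * (π / 2) ^ ((n:ℝ)/2) *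
        Real.exp (-(‖vv i k - ξ‖ ^ 2 / 8)) := by
  rw [stft_term_eval, norm_mul, Complex.norm_real, Real.norm_eq_abs,
    Complex.norm_exp]
  have h1 : 0 ≤ aa k * Real.exp (-(‖x‖ ^ 2 / 2)) * (π / 2) ^ ((n:ℝ)/2) *
      Real.exp (-(‖vv i k - ξ‖ ^ 2 / 8)) := by
    have := (aa_pos k).le
    have hπ : (0:ℝ) ≤ (π / 2) ^ ((n:ℝ)/2) := Real.rpow_nonneg (by positivity) _
    positivity
  rw [_root_.abs_of_nonneg h1]
  simp [Complex.mul_re]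

lemma continuous_term (i : Fin n) (k : ℕ) : Continuous (term i k) := by
  apply Continuous.mul
  apply Continuous.mul continuous_const
  · exact Complex.continuous_exp.comp (continuous_const.mul
      (Complex.continuous_ofReal.comp (continuous_const.inner continuous_id)))
  · exact Complex.continuous_exp.comp (Complex.continuous_ofReal.comp
      ((continuous_norm.pow 2).neg))

lemma summable_norm_term (i : Fin n) (y : V n) :
    Summable (fun k => ‖term i k y‖) := by
  simp only [norm_term]
  exact summable_aa.mul_right _

lemma continuous_ff (i : Fin n) : Continuous (ff i) := by
  apply continuous_tsum (continuous_term i) summable_aa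
  intro k y
  rw [norm_term]
  have h1 : Real.exp (-‖y‖ ^ 2) ≤ 1 := Real.exp_le_one_iff.mpr (by simp [sq_nonneg])
  nlinarith [aa_pos k, Real.exp_pos (-‖y‖ ^ 2)]

lemma norm_ff_le (i : Fin n) (y : V n) :
    ‖ff i y‖ ≤ (∑' k, aa k) * Real.exp (-‖y‖ ^ 2) := by
  calc ‖ff i y‖ ≤ ∑' k, ‖term i k y‖ := norm_tsum_le_tsum_norm (summable_norm_term i y)
  _ = ∑' k, aa k * Real.exp (-‖y‖ ^ 2) := by simp only [norm_term]
  _ = (∑' k, aa k) * Real.exp (-‖y‖ ^ 2) := tsum_mul_right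

lemma tsum_aa_nonneg : 0 ≤ ∑' k, aa k := tsum_nonneg (fun k => (aa_pos k).le)

lemma integrable_ff (i : Fin n) : Integrable (ff i) := by
  refine Integrable.mono ((integrable_gauss n 1 one_pos).const_mul (∑' k, aa k))
    (continuous_ff i).aestronglyMeasurable ?_
  filter_upwards with y
  have h3 : (0:ℝ) ≤ ∑' k, aa k := tsum_aa_nonneg
  rw [Real.norm_eq_abs, _root_.abs_of_nonneg (by positivity)]
  simpa using norm_ff_le i y

lemma memL2_ff (i : Fin n) : MemLp (ff i) 2 := by
  rw [MeasureTheory.memLp_two_iff_integrable_sq_norm (continuous_ff i).aestronglyMeasurable]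
  refine Integrable.mono ((integrable_gauss n 2 two_pos).const_mul ((∑' k, aa k) ^ 2))
    (((continuous_ff i).norm.pow 2)).aestronglyMeasurable ?_
  filter_upwards with y
  have h1 := norm_ff_le i y
  have h2 : Real.exp (-‖y‖ ^ 2) * Real.exp (-‖y‖ ^ 2) = Real.exp (-(2 * ‖y‖ ^ 2)) := by
    rw [← Real.exp_add]; ring_nf
  have h3 : (0:ℝ) ≤ ∑' k, aa k := tsum_aa_nonneg
  rw [Real.norm_eq_abs, Real.norm_eq_abs, _root_.abs_of_nonneg (by positivity),
    _root_.abs_of_nonneg (by positivity : (0:ℝ) ≤ (∑' k, aa k) ^ 2 * Real.exp (-(2 * ‖y‖ ^ 2)))]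
  nlinarith [norm_nonneg (ff i y), Real.exp_pos (-‖y‖ ^ 2)]

lemma integrable_gauss1 : Integrable (fun y : V n => Real.exp (-‖y‖ ^ 2)) := by
  have := integrable_gauss n 1 one_pos
  simpa using this

lemma lintegral_ofReal_lt_top {α : Type*} [MeasurableSpace α] {μ : Measure α} {f : α → ℝ}
    (h : Integrable f μ) : (∫⁻ x, ENNReal.ofReal (f x) ∂μ) < ⊤ := by
  refine lt_of_le_of_lt ?_ h.2
  refine lintegral_mono fun x => ?_
  rw [← ofReal_norm, Real.norm_eq_abs]
  exact ENNReal.ofReal_le_ofReal (le_abs_self _)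

/-- The gaussian lintegral constant. -/
def J (n : ℕ) : ℝ≥0∞ := ∫⁻ y : V n, ENNReal.ofReal (Real.exp (-‖y‖ ^ 2))

lemma J_lt_top : J n < ⊤ := lintegral_ofReal_lt_top integrable_gauss1

lemma norm_stft_integrand (i : Fin n) (k : ℕ) (x ξ : V n) (y : V n) :
    ‖term i k y * (starRingEnd ℂ) ((Real.exp (-‖y - x‖ ^ 2) : ℝ) : ℂ) *
        Complex.exp (-Complex.I * ((⟪y, ξ⟫ : ℝ) : ℂ))‖ =
      aa k * Real.exp (-‖y‖ ^ 2) * Real.exp (-‖y - x‖ ^ 2) := by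
  rw [norm_mul, norm_mul, norm_term, RCLike.norm_conj]
  have h1 : ‖((Real.exp (-‖y - x‖ ^ 2) : ℝ) : ℂ)‖ = Real.exp (-‖y - x‖ ^ 2) := by
    rw [Complex.norm_real, Real.norm_eq_abs, _root_.abs_of_nonneg (Real.exp_pos _).le]
  have h2 : ‖Complex.exp (-Complex.I * ((⟪y, ξ⟫ : ℝ) : ℂ))‖ = 1 := by
    rw [Complex.norm_exp]
    simp [Complex.mul_re]
  rw [h1, h2, mul_one]

lemma continuous_stft_integrand (i : Fin n) (k : ℕ) (x ξ : V n) :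
    Continuous (fun y : V n => term i k y *
      (starRingEnd ℂ) ((Real.exp (-‖y - x‖ ^ 2) : ℝ) : ℂ) *
      Complex.exp (-Complex.I * ((⟪y, ξ⟫ : ℝ) : ℂ))) := by
  apply Continuous.mul
  apply Continuous.mul (continuous_term i k)
  · exact Complex.continuous_conj.comp (Complex.continuous_ofReal.comp
      (Real.continuous_exp.comp (((continuous_id.sub continuous_const).norm.pow 2).neg)))
  · exact Complex.continuous_exp.comp (continuous_const.mul
      (Complex.continuous_ofReal.comp ((continuous_id.inner continuous_const))))

lemma lintegral_nnnorm_stft_integrand_le (i : Fin n) (k : ℕ) (x ξ : V n) :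
    (∫⁻ y : V n, ‖term i k y * (starRingEnd ℂ) ((Real.exp (-‖y - x‖ ^ 2) : ℝ) : ℂ) *
        Complex.exp (-Complex.I * ((⟪y, ξ⟫ : ℝ) : ℂ))‖₊) ≤
      ENNReal.ofReal (aa k) * J n := by
  rw [J, ← lintegral_const_mul' _ _ ENNReal.ofReal_ne_top]
  refine lintegral_mono fun y => ?_
  rw [← enorm_eq_nnnorm, ← ofReal_norm, norm_stft_integrand,
    ← ENNReal.ofReal_mul (aa_pos k).le]
  refine ENNReal.ofReal_le_ofReal ?_
  have h1 : Real.exp (-‖y - x‖ ^ 2) ≤ 1 := Real.exp_le_one_iff.mpr (by simp [sq_nonneg])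
  have ha := (aa_pos k).le
  have h0 : (0:ℝ) ≤ aa k * Real.exp (-‖y‖ ^ 2) := by positivity
  exact mul_le_of_le_one_right h0 h1

lemma tsum_ofReal_aa_lt_top : (∑' k, ENNReal.ofReal (aa k)) < ⊤ := by
  rw [← ENNReal.ofReal_tsum_of_nonneg (fun k => (aa_pos k).le) summable_aa]
  exact ENNReal.ofReal_lt_top

lemma stft_ff_eq (i : Fin n) (x ξ : V n) :
    stft (fun y : V n => ((Real.exp (-‖y‖ ^ 2) : ℝ) : ℂ)) (ff i) x ξ =
      ∑' k, ∫ y : V n, term i k y * (starRingEnd ℂ) ((Real.exp (-‖y - x‖ ^ 2) : ℝ) : ℂ) *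
        Complex.exp (-Complex.I * ((⟪y, ξ⟫ : ℝ) : ℂ)) := by
  rw [stft]
  have heq : (fun y : V n => ff i y * (starRingEnd ℂ) ((Real.exp (-‖y - x‖ ^ 2) : ℝ) : ℂ) *
      Complex.exp (-Complex.I * ((⟪y, ξ⟫ : ℝ) : ℂ))) =
      fun y : V n => ∑' k, term i k y *
        (starRingEnd ℂ) ((Real.exp (-‖y - x‖ ^ 2) : ℝ) : ℂ) *
        Complex.exp (-Complex.I * ((⟪y, ξ⟫ : ℝ) : ℂ)) := by
    funext y
    rw [ff, tsum_mul_right, tsum_mul_right]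
  rw [heq]
  refine MeasureTheory.integral_tsum
    (fun k => (continuous_stft_integrand i k x ξ).aestronglyMeasurable) ?_
  refine ne_top_of_le_ne_top ?_ (ENNReal.tsum_le_tsum
    (fun k => lintegral_nnnorm_stft_integrand_le i k x ξ))
  rw [ENNReal.tsum_mul_right]
  exact (ENNReal.mul_lt_top tsum_ofReal_aa_lt_top (J_lt_top (n := n))).ne

/-- The value of the Fourier transform as a nonnegative real function. -/
def rr (i : Fin n) (ξ : V n) : ℝ :=
  (2 * π) ^ (-(n:ℝ)/2) * ∑' k, aa k * π ^ ((n:ℝ)/2) * Real.exp (-(‖vv i k - ξ‖ ^ 2 / 4))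

lemma summable_rr (i : Fin n) (ξ : V n) :
    Summable (fun k => aa k * π ^ ((n:ℝ)/2) * Real.exp (-(‖vv i k - ξ‖ ^ 2 / 4))) := by
  refine Summable.of_nonneg_of_le (fun k => ?_) (fun k => ?_)
    (summable_aa.mul_right (π ^ ((n:ℝ)/2)))
  · have := (aa_pos k).le
    have := Real.rpow_nonneg pi_pos.le ((n:ℝ)/2)
    positivity
  · have h1 : Real.exp (-(‖vv i k - ξ‖ ^ 2 / 4)) ≤ 1 :=
      Real.exp_le_one_iff.mpr (by simp [sq_nonneg]; positivity)
    have ha := (aa_pos k).le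
    have hp := Real.rpow_nonneg pi_pos.le ((n:ℝ)/2)
    exact mul_le_of_le_one_right (by positivity) h1

lemma continuous_fourier_integrand (i : Fin n) (k : ℕ) (ξ : V n) :
    Continuous (fun y : V n => term i k y *
      Complex.exp (-Complex.I * ((⟪y, ξ⟫ : ℝ) : ℂ))) := by
  apply Continuous.mul (continuous_term i k)
  exact Complex.continuous_exp.comp (continuous_const.mul
    (Complex.continuous_ofReal.comp ((continuous_id.inner continuous_const))))

lemma lintegral_nnnorm_fourier_integrand_le (i : Fin n) (k : ℕ) (ξ : V n) :
    (∫⁻ y : V n, ‖term i k y *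
        Complex.exp (-Complex.I * ((⟪y, ξ⟫ : ℝ) : ℂ))‖₊) ≤
      ENNReal.ofReal (aa k) * J n := by
  rw [J, ← lintegral_const_mul' _ _ ENNReal.ofReal_ne_top]
  refine lintegral_mono fun y => ?_
  rw [← enorm_eq_nnnorm, ← ofReal_norm, norm_mul, norm_term,
    ← ENNReal.ofReal_mul (aa_pos k).le]
  refine ENNReal.ofReal_le_ofReal ?_
  have h2 : ‖Complex.exp (-Complex.I * ((⟪y, ξ⟫ : ℝ) : ℂ))‖ = 1 := by
    rw [Complex.norm_exp]
    simp [Complex.mul_re]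
  rw [h2, mul_one]

lemma fourierTr_ff_eq (i : Fin n) (ξ : V n) : fourierTr (ff i) ξ = ((rr i ξ : ℝ) : ℂ) := by
  rw [fourierTr]
  have heq : (fun y : V n => ff i y * Complex.exp (-Complex.I * ((⟪y, ξ⟫ : ℝ) : ℂ))) =
      fun y : V n => ∑' k, term i k y * Complex.exp (-Complex.I * ((⟪y, ξ⟫ : ℝ) : ℂ)) := by
    funext y
    rw [ff, tsum_mul_right]
  rw [heq]
  rw [MeasureTheory.integral_tsum
    (fun k => (continuous_fourier_integrand i k ξ).aestronglyMeasurable) ?hsum]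
  case hsum =>
    refine ne_top_of_le_ne_top ?_ (ENNReal.tsum_le_tsum
      (fun k => lintegral_nnnorm_fourier_integrand_le i k ξ))
    rw [ENNReal.tsum_mul_right]
    exact (ENNReal.mul_lt_top tsum_ofReal_aa_lt_top (J_lt_top (n := n))).ne
  simp only [fourier_term]
  rw [← Complex.ofReal_tsum, rr, ← Complex.ofReal_mul]

/-- abbreviation for the stft gaussian constant -/
def c2 (n : ℕ) : ℝ := (π / 2) ^ ((n:ℝ)/2)

lemma c2_pos : 0 < c2 n := Real.rpow_pos_of_pos (by positivity) _

lemma summable_stft_norms (i : Fin n) (x ξ : V n) :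
    Summable (fun k => aa k * Real.exp (-(‖x‖ ^ 2 / 2)) * c2 n *
      Real.exp (-(‖vv i k - ξ‖ ^ 2 / 8))) := by
  refine Summable.of_nonneg_of_le (fun k => ?_) (fun k => ?_)
    (summable_aa.mul_right (Real.exp (-(‖x‖ ^ 2 / 2)) * c2 n))
  · have := (aa_pos k).le
    have := c2_pos (n := n).le
    positivity
  · have h1 : Real.exp (-(‖vv i k - ξ‖ ^ 2 / 8)) ≤ 1 :=
      Real.exp_le_one_iff.mpr (by simp [sq_nonneg]; positivity)
    have ha := (aa_pos k).le
    have hc := c2_pos (n := n).le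
    calc aa k * Real.exp (-(‖x‖ ^ 2 / 2)) * c2 n * Real.exp (-(‖vv i k - ξ‖ ^ 2 / 8))
        ≤ aa k * Real.exp (-(‖x‖ ^ 2 / 2)) * c2 n * 1 := by
          refine mul_le_mul_of_nonneg_left h1 (by positivity)
      _ = aa k * (Real.exp (-(‖x‖ ^ 2 / 2)) * c2 n) := by ring

lemma pointwise_stft_bound (i : Fin n) (x ξ : V n) :
    ENNReal.ofReal ‖stft (fun y : V n => ((Real.exp (-‖y‖ ^ 2) : ℝ) : ℂ)) (ff i) x ξ‖ ≤
      ∑' k, ENNReal.ofReal (aa k * Real.exp (-(‖x‖ ^ 2 / 2)) * c2 n *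
        Real.exp (-(‖vv i k - ξ‖ ^ 2 / 8))) := by
  rw [stft_ff_eq]
  have hsum : Summable (fun k => ‖∫ y : V n, term i k y *
      (starRingEnd ℂ) ((Real.exp (-‖y - x‖ ^ 2) : ℝ) : ℂ) *
      Complex.exp (-Complex.I * ((⟪y, ξ⟫ : ℝ) : ℂ))‖) := by
    simp only [norm_stft_term]
    exact summable_stft_norms i x ξ
  calc ENNReal.ofReal ‖∑' k, ∫ y : V n, term i k y *
      (starRingEnd ℂ) ((Real.exp (-‖y - x‖ ^ 2) : ℝ) : ℂ) *
      Complex.exp (-Complex.I * ((⟪y, ξ⟫ : ℝ) : ℂ))‖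
      ≤ ENNReal.ofReal (∑' k, ‖∫ y : V n, term i k y *
        (starRingEnd ℂ) ((Real.exp (-‖y - x‖ ^ 2) : ℝ) : ℂ) *
        Complex.exp (-Complex.I * ((⟪y, ξ⟫ : ℝ) : ℂ))‖) :=
        ENNReal.ofReal_le_ofReal (norm_tsum_le_tsum_norm hsum)
    _ = ∑' k, ENNReal.ofReal (aa k * Real.exp (-(‖x‖ ^ 2 / 2)) * c2 n *
        Real.exp (-(‖vv i k - ξ‖ ^ 2 / 8))) := by
        simp only [norm_stft_term]
        exact ENNReal.ofReal_tsum_of_nonneg (fun k => by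
          have := (aa_pos k).le
          have := c2_pos (n := n).le
          positivity) (summable_stft_norms i x ξ)

lemma lintegral_gauss_half_lt_top :
    (∫⁻ x : V n, ENNReal.ofReal (Real.exp (-(‖x‖ ^ 2 / 2)))) < ⊤ := by
  refine lintegral_ofReal_lt_top ((integrable_gauss n 2⁻¹ (by norm_num)).congr ?_)
  filter_upwards with y
  ring_nf

lemma lintegral_gauss_eighth_lt_top :
    (∫⁻ x : V n, ENNReal.ofReal (Real.exp (-(‖x‖ ^ 2 / 8)))) < ⊤ := by
  refine lintegral_ofReal_lt_top ((integrable_gauss n 8⁻¹ (by norm_num)).congr ?_)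
  filter_upwards with y
  ring_nf

lemma lintegral_gauss_shift (i : Fin n) (k : ℕ) :
    (∫⁻ ξ : V n, ENNReal.ofReal (Real.exp (-(‖vv i k - ξ‖ ^ 2 / 8)))) =
      ∫⁻ x : V n, ENNReal.ofReal (Real.exp (-(‖x‖ ^ 2 / 8))) := by
  have h := lintegral_add_right_eq_self (μ := (volume : Measure (V n)))
    (fun ξ : V n => ENNReal.ofReal (Real.exp (-(‖ξ‖ ^ 2 / 8)))) (-(vv i k))
  rw [← h]
  congr 1
  funext ξ
  rw [norm_sub_rev, ← sub_eq_add_neg]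

lemma stft_finite (i : Fin n) :
    (∫⁻ q : V n × V n, ENNReal.ofReal
      ‖stft (fun y : V n => ((Real.exp (-‖y‖ ^ 2) : ℝ) : ℂ)) (ff i) q.1 q.2‖) < ⊤ := by
  set A := ∫⁻ x : V n, ENNReal.ofReal (Real.exp (-(‖x‖ ^ 2 / 2))) with hA
  set B := ∫⁻ x : V n, ENNReal.ofReal (Real.exp (-(‖x‖ ^ 2 / 8))) with hB
  have key : (∫⁻ q : V n × V n, ENNReal.ofReal
      ‖stft (fun y : V n => ((Real.exp (-‖y‖ ^ 2) : ℝ) : ℂ)) (ff i) q.1 q.2‖) ≤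
      ∑' k, ENNReal.ofReal (aa k * c2 n) * (A * B) := by
    calc (∫⁻ q : V n × V n, ENNReal.ofReal
        ‖stft (fun y : V n => ((Real.exp (-‖y‖ ^ 2) : ℝ) : ℂ)) (ff i) q.1 q.2‖)
        ≤ ∫⁻ q : V n × V n, ∑' k, ENNReal.ofReal (aa k * Real.exp (-(‖q.1‖ ^ 2 / 2)) * c2 n *
            Real.exp (-(‖vv i k - q.2‖ ^ 2 / 8))) :=
          lintegral_mono (fun q => pointwise_stft_bound i q.1 q.2)
      _ = ∑' k, ∫⁻ q : V n × V n, ENNReal.ofReal (aa k * Real.exp (-(‖q.1‖ ^ 2 / 2)) * c2 n *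
            Real.exp (-(‖vv i k - q.2‖ ^ 2 / 8))) := by
          refine lintegral_tsum (fun k => Measurable.aemeasurable ?_)
          refine Measurable.ennreal_ofReal ?_
          have : Continuous (fun q : V n × V n => aa k * Real.exp (-(‖q.1‖ ^ 2 / 2)) * c2 n *
              Real.exp (-(‖vv i k - q.2‖ ^ 2 / 8))) := by
            apply Continuous.mul
            apply Continuous.mul
            apply Continuous.mul continuous_const
            · exact Real.continuous_exp.comp
                (((continuous_norm.comp continuous_fst).pow 2).div_const 2).neg
            · exact continuous_const
            · exact Real.continuous_exp.comp
                ((((continuous_const.sub continuous_snd).norm.pow 2)).div_const 8).neg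
          exact this.measurable
      _ = ∑' k, ENNReal.ofReal (aa k * c2 n) * (A * B) := by
          congr 1
          funext k
          have hpt : ∀ q : V n × V n, ENNReal.ofReal (aa k * Real.exp (-(‖q.1‖ ^ 2 / 2)) * c2 n *
              Real.exp (-(‖vv i k - q.2‖ ^ 2 / 8))) =
              ENNReal.ofReal (aa k * c2 n) *
                (ENNReal.ofReal (Real.exp (-(‖q.1‖ ^ 2 / 2))) *
                  ENNReal.ofReal (Real.exp (-(‖vv i k - q.2‖ ^ 2 / 8)))) := by
            intro q
            rw [← ENNReal.ofReal_mul (by positivity), ← ENNReal.ofReal_mul (by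
              have := (aa_pos k).le
              have := c2_pos (n := n).le
              positivity)]
            congr 1
            ring
          simp only [hpt]
          rw [lintegral_const_mul' _ _ ENNReal.ofReal_ne_top]
          congr 1
          rw [MeasureTheory.Measure.volume_eq_prod, MeasureTheory.lintegral_prod_mul
            (f := fun x : V n => ENNReal.ofReal (Real.exp (-(‖x‖ ^ 2 / 2))))
            (g := fun ξ : V n => ENNReal.ofReal (Real.exp (-(‖vv i k - ξ‖ ^ 2 / 8))))
            (by fun_prop) (by fun_prop)]
          rw [lintegral_gauss_shift i k]
  refine lt_of_le_of_lt key ?_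
  rw [ENNReal.tsum_mul_right]
  refine ENNReal.mul_lt_top ?_ (ENNReal.mul_lt_top lintegral_gauss_half_lt_top
    lintegral_gauss_eighth_lt_top)
  calc (∑' k, ENNReal.ofReal (aa k * c2 n)) =
      ENNReal.ofReal (∑' k, aa k * c2 n) := by
        rw [ENNReal.ofReal_tsum_of_nonneg (fun k => by
          have := (aa_pos k).le
          have := c2_pos (n := n).le
          positivity) (summable_aa.mul_right _)]
    _ < ⊤ := ENNReal.ofReal_lt_top

lemma rr_nonneg (i : Fin n) (ξ : V n) : 0 ≤ rr i ξ := by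
  rw [rr]
  refine mul_nonneg (Real.rpow_nonneg (by positivity) _) (tsum_nonneg fun k => ?_)
  have := (aa_pos k).le
  have := Real.rpow_nonneg pi_pos.le ((n:ℝ)/2)
  positivity

lemma norm_fourierTr (i : Fin n) (ξ : V n) : ‖fourierTr (ff i) ξ‖ = rr i ξ := by
  rw [fourierTr_ff_eq, Complex.norm_real, Real.norm_eq_abs,
    _root_.abs_of_nonneg (rr_nonneg i ξ)]

/-- The divergence constant. -/
def C3 (n : ℕ) : ℝ :=
  ((2 * π) ^ (-(n:ℝ)/2) * π ^ ((n:ℝ)/2) * Real.exp (-1)) ^ 2 / 4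

lemma C3_pos : 0 < C3 n := by
  rw [C3]
  have h1 : (0:ℝ) < (2 * π) ^ (-(n:ℝ)/2) := Real.rpow_pos_of_pos (by positivity) _
  have h2 : (0:ℝ) < π ^ ((n:ℝ)/2) := Real.rpow_pos_of_pos pi_pos _
  positivity

lemma lower_on_ball (i : Fin n) (k : ℕ) (ξ : V n)
    (hξ : ξ ∈ Metric.ball (vv i k) 2⁻¹) :
    C3 n / ((k:ℝ) + 1) ≤ ‖ξ‖ ^ 2 * ‖fourierTr (ff i) ξ‖ ^ 2 := by
  set c0 : ℝ := (2 * π) ^ (-(n:ℝ)/2) with hc0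
  set pn : ℝ := π ^ ((n:ℝ)/2) with hpn
  have hc0p : 0 < c0 := Real.rpow_pos_of_pos (by positivity) _
  have hpnp : 0 < pn := Real.rpow_pos_of_pos pi_pos _
  have hap := aa_pos k
  have hdist : ‖vv i k - ξ‖ < 2⁻¹ := by
    rw [Metric.mem_ball, dist_eq_norm] at hξ
    rw [norm_sub_rev]
    exact hξ
  have hd0 := norm_nonneg (vv i k - ξ)
  have h1 : Real.exp (-1) ≤ Real.exp (-(‖vv i k - ξ‖ ^ 2 / 4)) := by
    refine Real.exp_le_exp.mpr ?_
    nlinarith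
  have h2 : c0 * (aa k * pn * Real.exp (-1)) ≤ rr i ξ := by
    rw [rr]
    refine mul_le_mul_of_nonneg_left ?_ hc0p.le
    calc aa k * pn * Real.exp (-1) ≤ aa k * pn * Real.exp (-(‖vv i k - ξ‖ ^ 2 / 4)) := by
          refine mul_le_mul_of_nonneg_left h1 (by positivity)
      _ ≤ ∑' j, aa j * pn * Real.exp (-(‖vv i j - ξ‖ ^ 2 / 4)) := by
          refine Summable.le_tsum (summable_rr i ξ) k fun j _ => ?_
          have := (aa_pos j).le
          positivity
  have h3 : ((k:ℝ) + 1) / 2 ≤ ‖ξ‖ := by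
    have h4 := norm_sub_norm_le (vv i k) ξ
    rw [norm_vv] at h4
    have hk : (1:ℝ) ≤ (k:ℝ) + 1 := by
      have : (0:ℝ) ≤ (k:ℝ) := Nat.cast_nonneg k
      linarith
    linarith
  have h5 : C3 n / ((k:ℝ) + 1) = (((k:ℝ) + 1) / 2) ^ 2 *
      (c0 * (aa k * pn * Real.exp (-1))) ^ 2 := by
    rw [div_eq_mul_inv, ← aa_sq k, C3, ← hc0, ← hpn]
    ring
  rw [h5, norm_fourierTr]
  have h6 : (0:ℝ) ≤ ((k:ℝ) + 1) / 2 := by positivity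
  have h7 : (0:ℝ) ≤ c0 * (aa k * pn * Real.exp (-1)) := by positivity
  exact mul_le_mul (pow_le_pow_left₀ h6 h3 2) (pow_le_pow_left₀ h7 h2 2)
    (by positivity) (sq_nonneg _)

lemma not_summable_inv_nat_add_one' : ¬ Summable (fun k : ℕ => ((k:ℝ) + 1)⁻¹) := by
  intro h
  apply Real.not_summable_one_div_natCast
  refine (summable_nat_add_iff 1).mp ?_
  refine h.congr fun k => ?_
  push_cast
  rw [one_div]

lemma tsum_ofReal_C3_div_eq_top : (∑' k : ℕ, ENNReal.ofReal (C3 n / ((k:ℝ) + 1))) = ⊤ := by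
  by_contra hfin
  have h1 : Summable (fun k : ℕ => Real.toNNReal (C3 n / ((k:ℝ) + 1))) := by
    refine ENNReal.tsum_coe_ne_top_iff_summable.mp ?_
    convert hfin using 2
    rfl
  have h2 : Summable (fun k : ℕ => C3 n / ((k:ℝ) + 1)) := by
    have := NNReal.summable_coe.mpr h1
    refine this.congr fun k => ?_
    have hC := C3_pos (n := n)
    rw [Real.coe_toNNReal _ (by positivity)]
  apply not_summable_inv_nat_add_one'
  have h3 := h2.mul_left (C3 n)⁻¹
  refine h3.congr fun k => ?_
  have hC := (C3_pos (n := n)).ne'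
  field_simp

lemma ball_disjoint (i : Fin n) {k j : ℕ} (hkj : j ≠ k) (ξ : V n)
    (hk : ξ ∈ Metric.ball (vv i k) 2⁻¹) : ξ ∉ Metric.ball (vv i j) 2⁻¹ := by
  intro hj
  rw [Metric.mem_ball, dist_eq_norm] at hk hj
  have h1 := norm_vv_sub i hkj
  have h2 : vv i j - vv i k = (ξ - vv i k) - (ξ - vv i j) := by abel
  have h3 := norm_sub_le (ξ - vv i k) (ξ - vv i j)
  rw [← h2] at h3
  linarith

lemma fourier_infinite (i : Fin n) :
    (∫⁻ ξ : V n, ENNReal.ofReal (‖ξ‖ ^ 2 * ‖fourierTr (ff i) ξ‖ ^ 2)) = ⊤ := by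
  have hpt : ∀ ξ : V n,
      (∑' k : ℕ, Set.indicator (Metric.ball (vv i k) 2⁻¹)
        (fun _ => ENNReal.ofReal (C3 n / ((k:ℝ) + 1))) ξ) ≤
      ENNReal.ofReal (‖ξ‖ ^ 2 * ‖fourierTr (ff i) ξ‖ ^ 2) := by
    intro ξ
    by_cases h : ∃ k, ξ ∈ Metric.ball (vv i k) 2⁻¹
    · obtain ⟨k0, hk0⟩ := h
      rw [tsum_eq_single k0 ?_]
      · rw [Set.indicator_of_mem hk0]
        exact ENNReal.ofReal_le_ofReal (lower_on_ball i k0 ξ hk0)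
      · intro j hj
        exact Set.indicator_of_notMem (ball_disjoint i hj ξ hk0) _
    · push_neg at h
      have : ∀ k : ℕ, Set.indicator (Metric.ball (vv i k) 2⁻¹)
          (fun _ => ENNReal.ofReal (C3 n / ((k:ℝ) + 1))) ξ = 0 :=
        fun k => Set.indicator_of_notMem (h k) _
      rw [tsum_congr this, tsum_zero]
      exact zero_le
  have hmono := lintegral_mono (μ := (volume : Measure (V n))) hpt
  have hswap : (∫⁻ ξ : V n, ∑' k : ℕ, Set.indicator (Metric.ball (vv i k) 2⁻¹)
      (fun _ => ENNReal.ofReal (C3 n / ((k:ℝ) + 1))) ξ) =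
      ∑' k : ℕ, ENNReal.ofReal (C3 n / ((k:ℝ) + 1)) *
        volume (Metric.ball (vv i k) 2⁻¹) := by
    rw [lintegral_tsum (fun k =>
      ((measurable_const.indicator measurableSet_ball).aemeasurable))]
    congr 1
    funext k
    rw [lintegral_indicator measurableSet_ball, MeasureTheory.setLIntegral_const]
  have hball : ∀ k : ℕ, volume (Metric.ball (vv i k) 2⁻¹) =
      volume (Metric.ball (0 : V n) 2⁻¹) := fun k =>
    MeasureTheory.Measure.addHaar_ball_center volume (vv i k) 2⁻¹
  have hβ0 : volume (Metric.ball (0 : V n) 2⁻¹) ≠ 0 :=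
    (Metric.measure_ball_pos volume (0 : V n) (by norm_num)).ne'
  have htop : (∫⁻ ξ : V n, ∑' k : ℕ, Set.indicator (Metric.ball (vv i k) 2⁻¹)
      (fun _ => ENNReal.ofReal (C3 n / ((k:ℝ) + 1))) ξ) = ⊤ := by
    rw [hswap]
    simp only [hball]
    rw [ENNReal.tsum_mul_right, tsum_ofReal_C3_div_eq_top, ENNReal.top_mul hβ0]
  rw [htop] at hmono
  exact top_le_iff.mp hmono

end

end NotSubH1

/-- There is `f ∈ L¹(ℝⁿ) ∩ L²(ℝⁿ)` whose STFT with Gaussian window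
`g(y) = e^{-|y|²}` satisfies `∬ |V_g f| < ∞`, while `∫ |ξ|²|𝓕f(ξ)|² dξ = ∞`;
hence `M^{1,1}(ℝⁿ) ⊄ H¹(ℝⁿ)`. -/
theorem modulation_not_subset_H1 (n : ℕ) (hn : 1 ≤ n) :
    ∃ f : EuclideanSpace ℝ (Fin n) → ℂ,
      Integrable f volume ∧ MemLp f 2 volume ∧
      (∫⁻ q : EuclideanSpace ℝ (Fin n) × EuclideanSpace ℝ (Fin n),
          ENNReal.ofReal
            ‖stft (fun y : EuclideanSpace ℝ (Fin n) => ((Real.exp (-‖y‖ ^ 2) : ℝ) : ℂ))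
              f q.1 q.2‖) < ⊤ ∧
      (∫⁻ ξ : EuclideanSpace ℝ (Fin n),
          ENNReal.ofReal (‖ξ‖ ^ 2 * ‖fourierTr f ξ‖ ^ 2)) = ⊤ := by
  exact ⟨NotSubH1.ff ⟨0, hn⟩, NotSubH1.integrable_ff ⟨0, hn⟩, NotSubH1.memL2_ff ⟨0, hn⟩,
    NotSubH1.stft_finite ⟨0, hn⟩, NotSubH1.fourier_infinite ⟨0, hn⟩⟩
end
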